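/- arXiv:1303.0678 — 2 statements merged into one kernel-verified Lean document; each statement's English description precedes it below -/
import Mathlib

section
/- Let ξ₁, …, ξ_m be independent random variables with common distribution P(ξ_n = 1) = p = 1 − P(ξ_n = 0), where 0 ≤ p ≤ 1, and let a₁, …, a_m be real numbers with σ² = Σ_{n=1}^m a_n². If t > 0 satisfies t · max_{1 ≤ n ≤ m} |a_n| ≤ 1, then E[ exp( t · Σ_{n=1}^m (p − ξ_n) a_n ) ] ≤ exp( p t² σ² ). -/
open MeasureTheory ProbabilityTheory Filter

private lemma exp_le_quad' {x : ℝ} (hx : |x| ≤ 1) : Real.exp x ≤ 1 + x + x ^ 2 := by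
  have h := Real.exp_bound hx (n := 2) (by norm_num)
  have h2 : ∑ m ∈ Finset.range 2, x ^ m / m.factorial = 1 + x := by
    simp [Finset.sum_range_succ]
  rw [h2] at h
  have h3 : ((Nat.succ 2 : ℕ) : ℝ) / ((Nat.factorial 2 : ℕ) * (2 : ℕ)) = 3 / 4 := by
    norm_num [Nat.factorial]
  rw [h3] at h
  have hx2 : |x| ^ 2 = x ^ 2 := sq_abs x
  have := abs_le.mp h
  nlinarith [sq_nonneg x]

private lemma key_numeric' {p c : ℝ} (hp0 : 0 ≤ p) (hc : |c| ≤ 1) :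
    p * Real.exp ((p - 1) * c) + (1 - p) * Real.exp (p * c) ≤ Real.exp (p * c ^ 2) := by
  have e1 : Real.exp ((p - 1) * c) = Real.exp (p * c) * Real.exp (-c) := by
    rw [← Real.exp_add]; ring_nf
  have h3 := Real.add_one_le_exp (p * (Real.exp (-c) - 1))
  have h4 : Real.exp (-c) ≤ 1 - c + c ^ 2 := by
    have := exp_le_quad' (x := -c) (by rwa [abs_neg]); nlinarith
  have hpos : 0 < Real.exp (p * c) := Real.exp_pos _
  calc p * Real.exp ((p - 1) * c) + (1 - p) * Real.exp (p * c)
      = Real.exp (p * c) * (1 + p * (Real.exp (-c) - 1)) := by rw [e1]; ring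
    _ ≤ Real.exp (p * c) * Real.exp (p * (Real.exp (-c) - 1)) := by
        apply mul_le_mul_of_nonneg_left _ hpos.le; linarith
    _ = Real.exp (p * c + p * (Real.exp (-c) - 1)) := (Real.exp_add _ _).symm
    _ ≤ Real.exp (p * c ^ 2) := by
        apply Real.exp_le_exp.mpr
        nlinarith [Real.exp_pos (-c)]

private lemma single_mgf' {Ω : Type*} [MeasurableSpace Ω] (P : Measure Ω)
    [IsProbabilityMeasure P] (X : Ω → ℝ) (hX : Measurable X) (p c : ℝ)
    (hp0 : 0 ≤ p) (hp1 : p ≤ 1)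
    (h1 : P {ω | X ω = 1} = ENNReal.ofReal p)
    (h0 : P {ω | X ω = 0} = ENNReal.ofReal (1 - p)) (hc : |c| ≤ 1) :
    ∫ ω, Real.exp ((p - X ω) * c) ∂P ≤ Real.exp (p * c ^ 2) := by
  set A : Set Ω := {ω | X ω = 1} with hAdef
  set Bs : Set Ω := {ω | X ω = 0} with hBdef
  have hA : MeasurableSet A := hX (measurableSet_singleton 1)
  have hBm : MeasurableSet Bs := hX (measurableSet_singleton 0)
  have hdisj : Disjoint A Bs := by
    rw [Set.disjoint_left]
    rintro ω (h1' : X ω = 1) (h0' : X ω = 0)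
    rw [h1'] at h0'; norm_num at h0'
  have hunion : P (A ∪ Bs) = 1 := by
    rw [measure_union hdisj hBm, h1, h0, ← ENNReal.ofReal_add hp0 (by linarith)]
    norm_num
  have hcompl : P (A ∪ Bs)ᶜ = 0 := by
    rw [measure_compl (hA.union hBm) (measure_ne_top _ _), hunion, measure_univ, tsub_self]
  set e1 : ℝ := Real.exp ((p - 1) * c)
  set e0 : ℝ := Real.exp (p * c)
  have hae : (fun ω => Real.exp ((p - X ω) * c)) =ᵐ[P]
      (fun ω => A.indicator (fun _ => e1) ω + Bs.indicator (fun _ => e0) ω) := by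
    have : ∀ᵐ ω ∂P, ω ∈ A ∪ Bs := by
      rw [ae_iff]
      convert hcompl using 2
      rfl
    filter_upwards [this] with ω hω
    rcases hω with hω | hω
    · have hx1 : X ω = 1 := hω
      have hx0 : ω ∉ Bs := fun h => by
        have : X ω = 0 := h; rw [hx1] at this; norm_num at this
      rw [Set.indicator_of_mem hω, Set.indicator_of_notMem hx0, hx1]
      simp [e1]
    · have hx0 : X ω = 0 := hω
      have hx1 : ω ∉ A := fun h => by
        have : X ω = 1 := h; rw [hx0] at this; norm_num at this
      rw [Set.indicator_of_notMem hx1, Set.indicator_of_mem hω, hx0]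
      simp [e0]
  rw [integral_congr_ae hae, integral_add
    ((integrable_const e1).indicator hA) ((integrable_const e0).indicator hBm),
    integral_indicator_const e1 hA, integral_indicator_const e0 hBm,
    measureReal_def, measureReal_def, h1, h0, ENNReal.toReal_ofReal hp0, ENNReal.toReal_ofReal (by linarith : (0:ℝ) ≤ 1 - p)]
  have hk := key_numeric' hp0 hc
  simp only [smul_eq_mul]
  calc p * e1 + (1 - p) * e0
      = p * Real.exp ((p - 1) * c) + (1 - p) * Real.exp (p * c) := rfl
    _ ≤ Real.exp (p * c ^ 2) := hk

/-- The moment generating function bound: for independent Bernoulli(p) variables `ξₙ`, real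
weights `aₙ` with `σ² = Σ aₙ²`, and `t > 0` with `t · max |aₙ| ≤ 1`, one has
`E[exp(t Σ (p - ξₙ) aₙ)] ≤ exp(p t² σ²)`. -/
theorem bernoulli_weighted_sum_mgf
    {Ω : Type*} [MeasurableSpace Ω] (P : Measure Ω) [IsProbabilityMeasure P]
    (m : ℕ) (ξ : Fin m → Ω → ℝ) (hmeas : ∀ n, Measurable (ξ n))
    (p : ℝ) (hp0 : 0 ≤ p) (hp1 : p ≤ 1)
    (hindep : iIndepFun ξ P)
    (h1 : ∀ n, P {ω | ξ n ω = 1} = ENNReal.ofReal p)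
    (h0 : ∀ n, P {ω | ξ n ω = 0} = ENNReal.ofReal (1 - p))
    (a : Fin m → ℝ) (σ2 B t : ℝ)
    (hσ : σ2 = ∑ n, (a n) ^ 2)
    (hB : IsGreatest {x : ℝ | ∃ n, x = |a n|} B)
    (ht : 0 < t) (htB : t * B ≤ 1) :
    ∫ ω, Real.exp (t * ∑ n, (p - ξ n ω) * a n) ∂P ≤ Real.exp (p * t ^ 2 * σ2) := by
  set Y : Fin m → Ω → ℝ := fun n ω => (p - ξ n ω) * a n with hY
  have hYmeas : ∀ n, Measurable (Y n) := fun n =>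
    ((measurable_const.sub (hmeas n)).mul measurable_const)
  have hYindep : iIndepFun Y P := by
    exact hindep.comp (fun n x => (p - x) * a n)
      (fun n => (measurable_const.sub measurable_id).mul measurable_const)
  have hc : ∀ n : Fin m, |t * a n| ≤ 1 := by
    intro n
    have hBn : |a n| ≤ B := hB.2 ⟨n, rfl⟩
    calc |t * a n| = t * |a n| := by rw [abs_mul, abs_of_pos ht]
      _ ≤ t * B := by exact mul_le_mul_of_nonneg_left hBn ht.le
      _ ≤ 1 := htB
  have hfactor : ∀ n : Fin m, mgf (Y n) P t ≤ Real.exp (p * t ^ 2 * a n ^ 2) := by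
    intro n
    have heq : mgf (Y n) P t = ∫ ω, Real.exp ((p - ξ n ω) * (t * a n)) ∂P := by
      unfold mgf
      congr 1
      funext ω
      simp only [hY]
      ring_nf
    rw [heq]
    have := single_mgf' P (ξ n) (hmeas n) p (t * a n) hp0 hp1 (h1 n) (h0 n) (hc n)
    calc ∫ ω, Real.exp ((p - ξ n ω) * (t * a n)) ∂P ≤ Real.exp (p * (t * a n) ^ 2) := this
      _ = Real.exp (p * t ^ 2 * a n ^ 2) := by ring_nf
  have hlhs : ∫ ω, Real.exp (t * ∑ n, (p - ξ n ω) * a n) ∂P = mgf (∑ n, Y n) P t := by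
    unfold mgf
    congr 1
    funext ω
    simp [Finset.sum_apply, hY]
  rw [hlhs, hYindep.mgf_sum hYmeas Finset.univ]
  calc ∏ n, mgf (Y n) P t ≤ ∏ n, Real.exp (p * t ^ 2 * a n ^ 2) :=
        Finset.prod_le_prod (fun n _ => mgf_nonneg) (fun n _ => hfactor n)
    _ = Real.exp (∑ n, p * t ^ 2 * a n ^ 2) := by rw [Real.exp_sum]
    _ = Real.exp (p * t ^ 2 * σ2) := by rw [hσ, Finset.mul_sum]
end

section
/- Let ξ₁, …, ξ_m be independent random variables with common distribution P(ξ_n = 1) = p = 1 − P(ξ_n = 0), where 0 < p ≤ 1, and let a₁, …, a_m be real numbers. Set Z = Σ_{n=1}^m (p − ξ_n) a_n, σ² = Σ_{n=1}^m a_n² and B = max_{1 ≤ n ≤ m} |a_n|. If Y > 0 satisfies Y·B ≤ 2pσ², then P( |Z| ≥ Y ) ≤ 2 exp( −Y² / (4 p σ²) ). -/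
open MeasureTheory ProbabilityTheory Filter

/-- Expectation of a function of a Bernoulli(p) random variable. -/
lemma bern_integral {Ω : Type*} [MeasurableSpace Ω] (P : Measure Ω) [IsProbabilityMeasure P]
    (f : Ω → ℝ) (hf : Measurable f) (p : ℝ) (hp0 : 0 ≤ p) (hp1 : p ≤ 1)
    (h1 : P {ω | f ω = 1} = ENNReal.ofReal p)
    (h0 : P {ω | f ω = 0} = ENNReal.ofReal (1 - p)) (g : ℝ → ℝ) :
    Integrable (fun ω => g (f ω)) P ∧ ∫ ω, g (f ω) ∂P = p * g 1 + (1 - p) * g 0 := by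
  set A : Set Ω := f ⁻¹' {1} with hA
  set Bs : Set Ω := f ⁻¹' {0} with hBs
  have hAm : MeasurableSet A := hf (measurableSet_singleton 1)
  have hBm : MeasurableSet Bs := hf (measurableSet_singleton 0)
  have hPA : P A = ENNReal.ofReal p := h1
  have hPB : P Bs = ENNReal.ofReal (1 - p) := h0
  have hunion : P (A ∪ Bs) = 1 := by
    rw [measure_union _ hBm, hPA, hPB, ← ENNReal.ofReal_add hp0 (by linarith)]
    · norm_num
    · intro s hsA hsB x hx
      have hx1 : f x = 1 := hsA hx
      have hx0 : f x = 0 := hsB hx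
      simp [hx1] at hx0
  have hcompl : P (A ∪ Bs)ᶜ = 0 := by
    rw [measure_compl (hAm.union hBm) (measure_ne_top _ _), hunion, measure_univ, tsub_self]
  set h : Ω → ℝ := fun ω => A.indicator (fun _ => g 1) ω + Bs.indicator (fun _ => g 0) ω with hh
  have hae : (fun ω => g (f ω)) =ᵐ[P] h := by
    filter_upwards [measure_eq_zero_iff_ae_notMem.mp hcompl] with ω hω
    have hω' : ω ∈ A ∪ Bs := by
      by_contra hc; exact hω hc
    rcases hω' with hωA | hωB
    · have hfa : f ω = 1 := hωA
      have : ω ∉ Bs := by simp [hBs, hfa]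
      simp [hh, Set.indicator_of_mem hωA, Set.indicator_of_notMem this, hfa]
    · have hfa : f ω = 0 := hωB
      have : ω ∉ A := by simp [hA, hfa]
      simp [hh, Set.indicator_of_mem hωB, Set.indicator_of_notMem this, hfa]
  have hint_h : Integrable h P :=
    ((integrable_const (g 1)).indicator hAm).add ((integrable_const (g 0)).indicator hBm)
  have hint : Integrable (fun ω => g (f ω)) P := hint_h.congr hae.symm
  refine ⟨hint, ?_⟩
  rw [integral_congr_ae hae, hh]
  rw [integral_add ((integrable_const (g 1)).indicator hAm)
      ((integrable_const (g 0)).indicator hBm)]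
  rw [integral_indicator_const _ hAm, integral_indicator_const _ hBm, measureReal_def, measureReal_def, hPA, hPB,
    ENNReal.toReal_ofReal hp0, ENNReal.toReal_ofReal (by linarith : (0:ℝ) ≤ 1 - p)]
  simp [mul_comm]

/-- Elementary inequality: `e^{-s} - 1 + s ≤ s²` for `|s| ≤ 1`. -/
lemma exp_neg_sub_le (s : ℝ) (hs : |s| ≤ 1) : Real.exp (-s) - 1 + s ≤ s ^ 2 := by
  have h := Real.exp_bound (x := -s) (by rwa [abs_neg]) (n := 2) (by norm_num)
  have hsum : ∑ m ∈ Finset.range 2, (-s) ^ m / (m.factorial : ℝ) = 1 - s := by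
    norm_num [Finset.sum_range_succ, sub_eq_add_neg]
  rw [hsum] at h
  have habs : |(-s)| ^ 2 = s ^ 2 := by rw [abs_neg, sq_abs]
  rw [habs] at h
  have h2 := le_trans (le_abs_self _) h
  norm_num [Nat.factorial] at h2
  nlinarith [sq_nonneg s]

/-- The single-variable mgf bound. -/
lemma bern_mgf_bound (p s : ℝ) (hp0 : 0 < p) (hp1 : p ≤ 1) (hs : |s| ≤ 1) :
    p * Real.exp ((p - 1) * s) + (1 - p) * Real.exp (p * s) ≤ Real.exp (p * s ^ 2) := by
  have hfac : p * Real.exp ((p - 1) * s) + (1 - p) * Real.exp (p * s)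
      = Real.exp (p * s) * (1 + p * (Real.exp (-s) - 1)) := by
    have : (p - 1) * s = p * s + (-s) := by ring
    rw [this, Real.exp_add]; ring
  rw [hfac]
  have h1 : 1 + p * (Real.exp (-s) - 1) ≤ Real.exp (p * (Real.exp (-s) - 1)) := by
    have := Real.add_one_le_exp (p * (Real.exp (-s) - 1)); linarith
  calc Real.exp (p * s) * (1 + p * (Real.exp (-s) - 1))
      ≤ Real.exp (p * s) * Real.exp (p * (Real.exp (-s) - 1)) := by
        apply mul_le_mul_of_nonneg_left h1 (Real.exp_nonneg _)
    _ = Real.exp (p * (Real.exp (-s) - 1 + s)) := by rw [← Real.exp_add]; ring_nf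
    _ ≤ Real.exp (p * s ^ 2) := by
        apply Real.exp_le_exp.mpr
        apply mul_le_mul_of_nonneg_left (exp_neg_sub_le s hs) hp0.le

/-- One-sided Chernoff bound. -/
lemma bern_chernoff_one
    {Ω : Type*} [MeasurableSpace Ω] (P : Measure Ω) [IsProbabilityMeasure P]
    (m : ℕ) (ξ : Fin m → Ω → ℝ) (hmeas : ∀ n, Measurable (ξ n))
    (p : ℝ) (hp0 : 0 < p) (hp1 : p ≤ 1)
    (hindep : iIndepFun ξ P)
    (h1 : ∀ n, P {ω | ξ n ω = 1} = ENNReal.ofReal p)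
    (h0 : ∀ n, P {ω | ξ n ω = 0} = ENNReal.ofReal (1 - p))
    (a : Fin m → ℝ) (σ2 Y : ℝ)
    (hσ : σ2 = ∑ n, (a n) ^ 2) (hσpos : 0 < σ2)
    (hY : 0 < Y) (ha : ∀ n, Y * |a n| ≤ 2 * p * σ2) :
    P {ω | Y ≤ ∑ n, (p - ξ n ω) * a n}
      ≤ ENNReal.ofReal (Real.exp (-Y ^ 2 / (4 * p * σ2))) := by
  have hden : (0:ℝ) < 2 * p * σ2 := by positivity
  set t : ℝ := Y / (2 * p * σ2) with ht
  have htpos : 0 < t := div_pos hY hden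
  set X : Fin m → Ω → ℝ := fun n ω => (p - ξ n ω) * a n with hX
  have hXmeas : ∀ n, Measurable (X n) :=
    fun n => (measurable_const.sub (hmeas n)).mul measurable_const
  have hXindep : iIndepFun X P := by
    have := hindep.comp (fun n (x : ℝ) => (p - x) * a n)
      (fun n => (measurable_const.sub measurable_id).mul measurable_const)
    exact this
  -- integrability and mgf value for each X n
  have hint : ∀ n, Integrable (fun ω => Real.exp (t * X n ω)) P := by
    intro n
    have := (bern_integral P (ξ n) (hmeas n) p hp0.le hp1 (h1 n) (h0 n)
      (fun x => Real.exp (t * ((p - x) * a n)))).1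
    exact this
  have hmgf : ∀ n, mgf (X n) P t ≤ Real.exp (p * (t * a n) ^ 2) := by
    intro n
    have hval := (bern_integral P (ξ n) (hmeas n) p hp0.le hp1 (h1 n) (h0 n)
      (fun x => Real.exp (t * ((p - x) * a n)))).2
    have hmgf_eq : mgf (X n) P t
        = p * Real.exp ((p - 1) * (t * a n)) + (1 - p) * Real.exp (p * (t * a n)) := by
      rw [mgf]
      rw [hval]
      ring_nf
    rw [hmgf_eq]
    apply bern_mgf_bound p (t * a n) hp0 hp1
    rw [abs_mul, abs_of_pos htpos, ht, div_mul_eq_mul_div, div_le_one hden]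
    exact ha n
  -- mgf of the sum
  have hmgf_sum : mgf (∑ n, X n) P t ≤ Real.exp (p * t ^ 2 * σ2) := by
    rw [hXindep.mgf_sum hXmeas]
    calc (∏ n, mgf (X n) P t) ≤ ∏ n, Real.exp (p * (t * a n) ^ 2) := by
          apply Finset.prod_le_prod (fun n _ => mgf_nonneg) (fun n _ => hmgf n)
      _ = Real.exp (∑ n, p * (t * a n) ^ 2) := by rw [Real.exp_sum]
      _ = Real.exp (p * t ^ 2 * σ2) := by
          congr 1
          rw [hσ, Finset.mul_sum]
          apply Finset.sum_congr rfl
          intro n _; ring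
  have hint_sum : Integrable (fun ω => Real.exp (t * (∑ n, X n) ω)) P :=
    hXindep.integrable_exp_mul_sum hXmeas (fun n _ => hint n)
  have hcher := measure_ge_le_exp_mul_mgf (μ := P) (X := ∑ n, X n) (t := t)
    Y htpos.le hint_sum
  have hset : {ω | Y ≤ ∑ n, (p - ξ n ω) * a n} = {ω | Y ≤ (∑ n, X n) ω} := by
    ext ω; simp [hX]
  rw [hset]
  have hbound : Real.exp (-t * Y) * mgf (∑ n, X n) P t ≤ Real.exp (-Y ^ 2 / (4 * p * σ2)) := by
    calc Real.exp (-t * Y) * mgf (∑ n, X n) P t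
        ≤ Real.exp (-t * Y) * Real.exp (p * t ^ 2 * σ2) :=
          mul_le_mul_of_nonneg_left hmgf_sum (Real.exp_nonneg _)
      _ = Real.exp (-t * Y + p * t ^ 2 * σ2) := by rw [← Real.exp_add]
      _ = Real.exp (-Y ^ 2 / (4 * p * σ2)) := by
          congr 1
          rw [ht]
          field_simp
          ring
  have hfin : P {ω | Y ≤ (∑ n, X n) ω} ≠ ⊤ := measure_ne_top _ _
  rw [← ENNReal.ofReal_toReal hfin]
  exact ENNReal.ofReal_le_ofReal (le_trans hcher hbound)

/-- The real-coefficient tail bound: for independent Bernoulli(p) variables `ξₙ`, real weights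
`aₙ`, `Z = Σ (p - ξₙ) aₙ`, `σ² = Σ aₙ²`, `B = max |aₙ|`, if `Y·B ≤ 2pσ²` then
`P(|Z| ≥ Y) ≤ 2 exp(-Y²/(4 p σ²))`. -/
theorem bernoulli_weighted_sum_real_tail
    {Ω : Type*} [MeasurableSpace Ω] (P : Measure Ω) [IsProbabilityMeasure P]
    (m : ℕ) (ξ : Fin m → Ω → ℝ) (hmeas : ∀ n, Measurable (ξ n))
    (p : ℝ) (hp0 : 0 < p) (hp1 : p ≤ 1)
    (hindep : iIndepFun ξ P)
    (h1 : ∀ n, P {ω | ξ n ω = 1} = ENNReal.ofReal p)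
    (h0 : ∀ n, P {ω | ξ n ω = 0} = ENNReal.ofReal (1 - p))
    (a : Fin m → ℝ) (σ2 B Y : ℝ)
    (hσ : σ2 = ∑ n, (a n) ^ 2)
    (hB : IsGreatest {x : ℝ | ∃ n, x = |a n|} B)
    (hY : 0 < Y) (hYB : Y * B ≤ 2 * p * σ2) :
    P {ω | Y ≤ |∑ n, (p - ξ n ω) * a n|}
      ≤ ENNReal.ofReal (2 * Real.exp (-Y ^ 2 / (4 * p * σ2))) := by
  have hσnn : 0 ≤ σ2 := by
    rw [hσ]; exact Finset.sum_nonneg fun n _ => sq_nonneg _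
  rcases eq_or_lt_of_le hσnn with hσ0 | hσpos
  · -- σ2 = 0 : trivial bound since RHS = 2
    have : -Y ^ 2 / (4 * p * σ2) = 0 := by rw [← hσ0]; simp
    rw [this, Real.exp_zero, mul_one]
    calc P {ω | Y ≤ |∑ n, (p - ξ n ω) * a n|} ≤ 1 := prob_le_one
      _ ≤ ENNReal.ofReal 2 := by norm_num
  · -- σ2 > 0 : union bound with the one-sided Chernoff bounds
    have haB : ∀ n, Y * |a n| ≤ 2 * p * σ2 := by
      intro n
      have h1' : |a n| ≤ B := hB.2 ⟨n, rfl⟩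
      calc Y * |a n| ≤ Y * B := by nlinarith [abs_nonneg (a n)]
        _ ≤ 2 * p * σ2 := hYB
    have hpos := bern_chernoff_one P m ξ hmeas p hp0 hp1 hindep h1 h0 a σ2 Y hσ hσpos hY haB
    have hneg := bern_chernoff_one P m ξ hmeas p hp0 hp1 hindep h1 h0 (fun n => -a n) σ2 Y
      (by rw [hσ]; simp) hσpos hY (by intro n; simpa using haB n)
    have hsub : {ω | Y ≤ |∑ n, (p - ξ n ω) * a n|}
        ⊆ {ω | Y ≤ ∑ n, (p - ξ n ω) * a n} ∪ {ω | Y ≤ ∑ n, (p - ξ n ω) * (-a n)} := by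
      intro ω hω
      simp only [Set.mem_setOf_eq] at hω
      rcases le_abs.mp hω with h | h
      · exact Or.inl h
      · refine Or.inr ?_
        show Y ≤ ∑ n, (p - ξ n ω) * (-a n)
        have : ∑ n, (p - ξ n ω) * (-a n) = -∑ n, (p - ξ n ω) * a n := by
          rw [← Finset.sum_neg_distrib]
          apply Finset.sum_congr rfl
          intro n _; ring
        rw [this]; exact h
    calc P {ω | Y ≤ |∑ n, (p - ξ n ω) * a n|}
        ≤ P ({ω | Y ≤ ∑ n, (p - ξ n ω) * a n} ∪ {ω | Y ≤ ∑ n, (p - ξ n ω) * (-a n)}) :=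
          measure_mono hsub
      _ ≤ P {ω | Y ≤ ∑ n, (p - ξ n ω) * a n} + P {ω | Y ≤ ∑ n, (p - ξ n ω) * (-a n)} :=
          measure_union_le _ _
      _ ≤ ENNReal.ofReal (Real.exp (-Y ^ 2 / (4 * p * σ2)))
            + ENNReal.ofReal (Real.exp (-Y ^ 2 / (4 * p * σ2))) := add_le_add hpos hneg
      _ = ENNReal.ofReal (2 * Real.exp (-Y ^ 2 / (4 * p * σ2))) := by
          rw [← ENNReal.ofReal_add (Real.exp_nonneg _) (Real.exp_nonneg _)]
          ring_nf
end
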